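/- The degenerate r-Whitney numbers of the first kind satisfy V_{m,λ}^{(r+1)}(n,l) = Σ_{k=l}^{n} C(k,l) (−1)^{k−l} ⟨1⟩_{k−l,λ} V_{m,λ}^{(r)}(n,k), where ⟨1⟩_{j,λ} = 1·(1+λ)···(1+(j−1)λ) is the generalized rising factorial of 1. -/

import Mathlib

open Finset Polynomial

/-- generalized falling factorial: (x)_{n,λ} = x(x-λ)···(x-(n-1)λ) -/
def dff (lam x : ℝ) (n : ℕ) : ℝ := ∏ i ∈ Finset.range n, (x - i * lam)

/-- generalized rising factorial: ⟨x⟩_{n,λ} = x(x+λ)···(x+(n-1)λ) -/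
def drf (lam x : ℝ) (n : ℕ) : ℝ := ∏ i ∈ Finset.range n, (x + i * lam)


lemma dff_succ (lam x : ℝ) (n : ℕ) : dff lam x (n+1) = dff lam x n * (x - n * lam) :=
  Finset.prod_range_succ _ _
lemma drf_succ (lam x : ℝ) (n : ℕ) : drf lam x (n+1) = drf lam x n * (x + n * lam) :=
  Finset.prod_range_succ _ _

noncomputable def cc (lam : ℝ) (k l : ℕ) : ℝ :=
  (k.choose l : ℝ) * (-1 : ℝ) ^ (k - l) * drf lam 1 (k - l)

lemma cc_zero (lam : ℝ) {k l : ℕ} (h : k < l) : cc lam k l = 0 := by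
  simp [cc, Nat.choose_eq_zero_of_lt h]

lemma cc_rec (lam : ℝ) (k l : ℕ) (h : l ≤ k) :
    cc lam (k+1) (l+1) = cc lam k l - cc lam k (l+1) * (1 + ((k - (l+1) : ℕ) : ℝ) * lam) := by
  rcases eq_or_lt_of_le h with rfl | h
  · simp [cc, Nat.choose_succ_self, Nat.choose_self, drf]
  · obtain ⟨j, rfl⟩ := Nat.exists_eq_add_of_lt h
    have h1 : l + j + 1 - l = j + 1 := by omega
    have h2 : l + j + 1 + 1 - (l + 1) = j + 1 := by omega
    have h3 : l + j + 1 - (l + 1) = j := by omega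
    have hp : ((l + j + 1 + 1).choose (l+1) : ℝ) =
        ((l+j+1).choose l : ℝ) + ((l+j+1).choose (l+1) : ℝ) := by
      rw [Nat.choose_succ_succ (l+j+1) l]; push_cast; ring
    simp only [cc, h1, h2, h3, hp, drf_succ]
    push_cast
    ring

lemma key (lam : ℝ) : ∀ (k : ℕ) (y : ℝ),
    dff lam y k = ∑ l ∈ range (k+1), cc lam k l * dff lam (y+1) l := by
  intro k
  induction k with
  | zero => intro y; simp [dff, cc, drf]
  | succ k ih =>
    intro y
    have step : dff lam y (k+1) = dff lam y k * (y - k * lam) := dff_succ _ _ _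
    rw [step, ih y, Finset.sum_mul]
    have split : ∀ l ∈ range (k+1),
        cc lam k l * dff lam (y+1) l * (y - k * lam)
        = cc lam k l * dff lam (y+1) (l+1)
          - (cc lam k l * (1 + ((k - l : ℕ) : ℝ) * lam)) * dff lam (y+1) l := by
      intro l hl
      have hlk : l ≤ k := by simpa [Nat.lt_succ_iff] using hl
      have : (y - k * lam) = (y + 1 - l * lam) - (1 + ((k - l : ℕ) : ℝ) * lam) := by
        have : ((k - l : ℕ) : ℝ) = (k : ℝ) - l := by
          push_cast [Nat.cast_sub hlk]; ring
        rw [this]; ring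
      rw [this, dff_succ]
      ring
    rw [Finset.sum_congr rfl split, Finset.sum_sub_distrib]
    -- handle sums
    have e1 : ∑ l ∈ range (k+2), cc lam (k+1) l * dff lam (y+1) l
        = (∑ l ∈ range (k+1), cc lam (k+1) (l+1) * dff lam (y+1) (l+1))
          + cc lam (k+1) 0 * dff lam (y+1) 0 := Finset.sum_range_succ' _ _
    have e2 : ∑ l ∈ range (k+1), (cc lam k l * (1 + ((k - l : ℕ) : ℝ) * lam)) * dff lam (y+1) l
        = (∑ l ∈ range k, (cc lam k (l+1) * (1 + ((k - (l+1) : ℕ) : ℝ) * lam)) * dff lam (y+1) (l+1))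
          + (cc lam k 0 * (1 + ((k - 0 : ℕ) : ℝ) * lam)) * dff lam (y+1) 0 :=
      Finset.sum_range_succ' _ _
    have e2' : ∑ l ∈ range (k+1), (cc lam k (l+1) * (1 + ((k - (l+1) : ℕ) : ℝ) * lam)) * dff lam (y+1) (l+1)
        = ∑ l ∈ range k, (cc lam k (l+1) * (1 + ((k - (l+1) : ℕ) : ℝ) * lam)) * dff lam (y+1) (l+1) := by
      rw [Finset.sum_range_succ, cc_zero lam (Nat.lt_succ_self k)]
      simp
    rw [e1, e2, ← e2']
    have term : ∀ l ∈ range (k+1),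
        cc lam (k+1) (l+1) * dff lam (y+1) (l+1)
        = cc lam k l * dff lam (y+1) (l+1)
          - (cc lam k (l+1) * (1 + ((k - (l+1) : ℕ) : ℝ) * lam)) * dff lam (y+1) (l+1) := by
      intro l hl
      have hlk : l ≤ k := by simpa [Nat.lt_succ_iff] using hl
      rw [cc_rec lam k l hlk]; ring
    have base : cc lam (k+1) 0 = -(cc lam k 0 * (1 + ((k - 0 : ℕ) : ℝ) * lam)) := by
      simp only [cc, Nat.choose_zero_right, Nat.sub_zero, Nat.cast_one, one_mul]
      rw [pow_succ, drf_succ]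
      push_cast; ring
    rw [Finset.sum_congr rfl term, Finset.sum_sub_distrib, base]
    ring

noncomputable def dffP (lam : ℝ) (n : ℕ) : Polynomial ℝ :=
  ∏ i ∈ Finset.range n, (X - C ((i : ℝ) * lam))

lemma dffP_eval (lam y : ℝ) (n : ℕ) : (dffP lam n).eval y = dff lam y n := by
  simp [dffP, dff, eval_prod]

lemma dffP_monic (lam : ℝ) (n : ℕ) : (dffP lam n).Monic :=
  monic_prod_of_monic _ _ (fun i _ => monic_X_sub_C _)

lemma dffP_natDegree (lam : ℝ) (n : ℕ) : (dffP lam n).natDegree = n := by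
  rw [dffP, natDegree_prod _ _ (fun i _ => X_sub_C_ne_zero _)]
  simp only [natDegree_X_sub_C]
  simp

lemma top_coeff_zero (lam : ℝ) (n : ℕ) (a : ℕ → ℝ)
    (h : ∀ y : ℝ, ∑ l ∈ range (n+1), a l * dff lam y l = 0) : a n = 0 := by
  set Q : Polynomial ℝ := ∑ l ∈ range (n+1), C (a l) * dffP lam l with hQ
  have hev : ∀ y : ℝ, Q.eval y = 0 := by
    intro y
    rw [hQ, eval_finset_sum]
    simpa [dffP_eval] using h y
  have hQ0 : Q = 0 := by
    apply Polynomial.funext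
    intro y; rw [hev y]; simp
  have : Q.coeff n = a n := by
    rw [hQ, finset_sum_coeff, Finset.sum_range_succ]
    have h1 : ∀ l ∈ range n, (C (a l) * dffP lam l).coeff n = 0 := by
      intro l hl
      apply coeff_eq_zero_of_natDegree_lt
      calc (C (a l) * dffP lam l).natDegree ≤ (C (a l)).natDegree + (dffP lam l).natDegree :=
            natDegree_mul_le
        _ < n := by simp [dffP_natDegree]; exact mem_range.mp hl
    rw [Finset.sum_eq_zero h1, coeff_C_mul]
    have := (dffP_monic lam n).coeff_natDegree
    rw [dffP_natDegree] at this
    rw [this]; ring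
  rw [hQ0] at this; simpa using this.symm

lemma unique (lam : ℝ) : ∀ (n : ℕ) (a : ℕ → ℝ),
    (∀ y : ℝ, ∑ l ∈ range (n+1), a l * dff lam y l = 0) → ∀ l ≤ n, a l = 0 := by
  intro n
  induction n with
  | zero =>
    intro a h l hl
    interval_cases l
    simpa [dff] using h 0
  | succ n ih =>
    intro a h l hl
    have htop : a (n+1) = 0 := top_coeff_zero lam (n+1) a h
    have h' : ∀ y : ℝ, ∑ l ∈ range (n+1), a l * dff lam y l = 0 := by
      intro y
      have := h y
      rwa [Finset.sum_range_succ, htop, zero_mul, add_zero] at this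
    rcases Nat.lt_succ_iff_lt_or_eq.mp (Nat.lt_succ_of_le hl) with h1 | h1
    · exact ih a h' l (by omega)
    · rw [h1]; exact htop

theorem stmt14 (m : ℕ) (hm : 0 < m) (r : ℕ) (lam : ℝ) (Vr Vr1 : ℕ → ℕ → ℝ)
    (hVr : ∀ n : ℕ, ∀ x : ℝ,
      (m : ℝ) ^ n * dff 1 x n = ∑ k ∈ range (n + 1), Vr n k * dff lam ((m : ℝ) * x + r) k)
    (hVr1 : ∀ n : ℕ, ∀ x : ℝ,
      (m : ℝ) ^ n * dff 1 x n = ∑ k ∈ range (n + 1), Vr1 n k * dff lam ((m : ℝ) * x + (r + 1)) k) :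
    ∀ n l : ℕ, l ≤ n →
      Vr1 n l = ∑ k ∈ Finset.Icc l n,
        (k.choose l : ℝ) * (-1 : ℝ) ^ (k - l) * drf lam 1 (k - l) * Vr n k := by
  intro n l hl
  have hm' : (m : ℝ) ≠ 0 := by positivity
  set b : ℕ → ℝ := fun j => Vr1 n j - ∑ k ∈ range (n+1), Vr n k * cc lam k j with hb
  have hzero : ∀ z : ℝ, ∑ j ∈ range (n+1), b j * dff lam z j = 0 := by
    intro z
    set x : ℝ := (z - r - 1) / m with hx
    have hz1 : (m : ℝ) * x + (r + 1) = z := by rw [hx]; field_simp; ring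
    have hz2 : (m : ℝ) * x + r = z - 1 := by rw [hx]; field_simp; ring
    have e1 := hVr1 n x
    have e2 := hVr n x
    rw [hz1] at e1
    rw [hz2] at e2
    have e3 : ∑ k ∈ range (n+1), Vr n k * dff lam (z-1) k
        = ∑ j ∈ range (n+1), (∑ k ∈ range (n+1), Vr n k * cc lam k j) * dff lam z j := by
      have inner : ∀ k ∈ range (n+1), Vr n k * dff lam (z-1) k
          = ∑ j ∈ range (n+1), Vr n k * (cc lam k j * dff lam z j) := by
        intro k hk
        rw [key lam k (z-1)]
        have hz : z - 1 + 1 = z := by ring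
        rw [hz, Finset.mul_sum]
        apply Finset.sum_subset
        · exact Finset.range_subset_range.mpr (by simpa [Nat.lt_succ_iff] using mem_range.mp hk)
        · intro j _ hj
          rw [cc_zero lam (by simpa [Nat.lt_succ_iff] using hj)]
          ring
      rw [Finset.sum_congr rfl inner, Finset.sum_comm]
      apply Finset.sum_congr rfl
      intro j _
      rw [Finset.sum_mul]
      apply Finset.sum_congr rfl
      intro k _
      ring
    have := e1.symm.trans (e2.trans e3)
    simp only [hb, sub_mul, Finset.sum_sub_distrib]
    rw [this]
    ring
  have hbz := unique lam n b hzero l hl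
  have : Vr1 n l = ∑ k ∈ range (n+1), Vr n k * cc lam k l := by
    have := hbz
    simp only [hb] at this
    linarith
  rw [this]
  rw [← Finset.sum_subset (show Finset.Icc l n ⊆ range (n+1) by
        intro k hk; simp only [Finset.mem_Icc] at hk; exact mem_range.mpr (by omega))
      (by intro k hk1 hk2
          simp only [Finset.mem_range] at hk1
          simp only [Finset.mem_Icc, not_and, not_le] at hk2
          rw [cc_zero lam (by omega : k < l)]
          ring)]
  apply Finset.sum_congr rfl
  intro k _
  simp only [cc]
  ring
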